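/- Let m ≥ 1 and n be integers with n + 1 ≥ m, and let d ∈ (0,1). For the local operator φ(ω) = (ω(1 − ω))^m, whose derivative is φ′(ω) = m(1 − 2ω)(ω(1 − ω))^{m−1}, one has for all ω ∈ [0,1]: (n+1)φ(ω) − φ′(ω)(ω − d) ≥ m(ω(1 − ω))^{m−1}·((ω − d)² + d(1 − d)) ≥ 0; i.e., the monotonicity condition (n+1)φ(ω) − φ′(ω)(ω − d) ≥ 0 holds on [0,1]. -/

import Mathlib

/-- Let `m ≥ 1` and `n` be integers with `n + 1 ≥ m`, and let
`d ∈ (0,1)`.  For the local operator `φ(ω) = (ω(1 − ω))^m`, whose derivative is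
`φ′(ω) = m(1 − 2ω)(ω(1 − ω))^{m−1}`, one has for all `ω ∈ [0,1]`:
`(n+1)φ(ω) − φ′(ω)(ω − d) ≥ m(ω(1 − ω))^{m−1}·((ω − d)² + d(1 − d)) ≥ 0`;
i.e. the monotonicity condition `(n+1)φ(ω) − φ′(ω)(ω − d) ≥ 0` holds
on `[0,1]`. -/
theorem stmt14 (d : ℝ) (hd : d ∈ Set.Ioo (0 : ℝ) 1) (m n : ℕ)
    (hm : 1 ≤ m) (hmn : m ≤ n + 1)
    (φ : ℝ → ℝ) (hφ : ∀ ω : ℝ, φ ω = (ω * (1 - ω)) ^ m) :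
    (∀ ω : ℝ, HasDerivAt φ ((m : ℝ) * (1 - 2 * ω) * (ω * (1 - ω)) ^ (m - 1)) ω) ∧
    (∀ ω ∈ Set.Icc (0 : ℝ) 1,
      (m : ℝ) * (ω * (1 - ω)) ^ (m - 1) * ((ω - d) ^ 2 + d * (1 - d)) ≤
        ((n : ℝ) + 1) * φ ω - ((m : ℝ) * (1 - 2 * ω) * (ω * (1 - ω)) ^ (m - 1)) * (ω - d)) ∧
    (∀ ω ∈ Set.Icc (0 : ℝ) 1,
      0 ≤ (m : ℝ) * (ω * (1 - ω)) ^ (m - 1) * ((ω - d) ^ 2 + d * (1 - d))) := by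
  have hφe : φ = fun ω => (ω * (1 - ω)) ^ m := funext hφ
  subst hφe
  obtain ⟨hd0, hd1⟩ := hd
  refine ⟨?_, ?_, ?_⟩
  · intro ω
    have h1 : HasDerivAt (fun ω : ℝ => ω * (1 - ω)) (1 - 2 * ω) ω := by
      have := (hasDerivAt_id' ω).fun_mul ((hasDerivAt_const ω (1 : ℝ)).fun_sub (hasDerivAt_id' ω))
      simpa using this.congr_deriv (by ring)
    have h2 := h1.fun_pow m
    refine h2.congr_deriv ?_
    ring
  · intro ω hω
    obtain ⟨h0, h1⟩ := hω
    have hp : 0 ≤ ω * (1 - ω) := mul_nonneg h0 (by linarith)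
    have hq : 0 ≤ (ω * (1 - ω)) ^ (m - 1) := pow_nonneg hp _
    have hnm : (m : ℝ) ≤ (n : ℝ) + 1 := by exact_mod_cast hmn
    have hpm : (ω * (1 - ω)) ^ m = (ω * (1 - ω)) ^ (m - 1) * (ω * (1 - ω)) := by
      rw [← pow_succ]; congr 1; omega
    simp only [hpm]
    nlinarith [mul_nonneg (mul_nonneg (sub_nonneg.2 hnm) hq) hp]
  · intro ω hω
    obtain ⟨h0, h1⟩ := hω
    have hp : 0 ≤ ω * (1 - ω) := mul_nonneg h0 (by linarith)
    have hq : 0 ≤ (ω * (1 - ω)) ^ (m - 1) := pow_nonneg hp _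
    have : (0 : ℝ) ≤ (ω - d) ^ 2 + d * (1 - d) := by nlinarith [sq_nonneg (ω - d)]
    positivity
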